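/- Suppose the conditional mean function of Y given X is linear, E[Y|X] = X'β₀ almost surely, and σ(X) := E[(Y−X'β₀)²|X]^{1/2} satisfies P[σ(X) > 0] = 1. Consider the functional MVR criterion Q₀(ψ) := E[(1/2){((Y−X'β₀)/ψ(X))² + 1}·ψ(X)] over the set S = {ψ : ψ measurable, E|ψ(X)| < ∞ and P[ψ(X) > 0] = 1} of admissible conditional standard deviation functions (restricted to those ψ for which Q₀(ψ) is finite). Then the true conditional standard deviation σ is the unique minimizer of Q₀ over S: Q₀(σ) ≤ Q₀(ψ) for all admissible ψ, with equality if and only if ψ(X) = σ(X) almost surely. In particular Q₀(σ) = E[σ(X)]. -/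

import Mathlib

open MeasureTheory Filter

noncomputable section

namespace MVR

/-- Lower endpoint of the scale-function domain: `zero` codes `a = 0`, `negInf` codes `a = -∞`. -/
inductive LB | zero | negInf

/-- The domain `(a, ∞)` of the scale function. -/
def LB.dom : LB → Set ℝ
  | LB.zero => Set.Ioi 0
  | LB.negInf => Set.univ

/-- The filter "t → a from within the domain". -/
def LB.atLB : LB → Filter ℝ
  | LB.zero => nhdsWithin 0 (Set.Ioi 0)
  | LB.negInf => Filter.atBot

/-- Assumption 1: the scale function `s : (a,∞) → (0,∞)` is three times differentiable,
strictly increasing, convex, with `s(t) → 0` as `t → a` and `s(t) → ∞` as `t → ∞`. -/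
structure IsScale (A : LB) (s : ℝ → ℝ) : Prop where
  pos : ∀ t ∈ A.dom, 0 < s t
  smooth : ContDiffOn ℝ 3 s A.dom
  mono : StrictMonoOn s A.dom
  convex : ConvexOn ℝ A.dom s
  tendsto_lb : Filter.Tendsto s A.atLB (nhds 0)
  tendsto_top : Filter.Tendsto s Filter.atTop Filter.atTop

/-- Euclidean inner product on `ℝ^k`. -/
def mdot {k : ℕ} (x y : Fin k → ℝ) : ℝ := ∑ i, x i * y i

/-- Euclidean norm on `ℝ^k`. -/
def ednorm {k : ℕ} (x : Fin k → ℝ) : ℝ := Real.sqrt (∑ i, (x i) ^ 2)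

/-- Euclidean norm on `ℝ^k × ℝ^k`. -/
def pnorm {k : ℕ} (θ : (Fin k → ℝ) × (Fin k → ℝ)) : ℝ :=
  Real.sqrt (∑ i, (θ.1 i) ^ 2 + ∑ i, (θ.2 i) ^ 2)

/-- The vector `(g, 0, …, 0) ∈ ℝ^k`. -/
def lsγ {k : ℕ} [NeZero k] (g : ℝ) : Fin k → ℝ := fun i => if i = 0 then g else 0

/-- Topological support of a measure: points all of whose neighbourhoods have positive measure. -/
def measSupport {α : Type*} [TopologicalSpace α] [MeasurableSpace α] (μ : Measure α) : Set α :=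
  {x | ∀ U ∈ nhds x, μ U ≠ 0}

/-- Standard Gaussian density `φ`. -/
def gaussD (z : ℝ) : ℝ := (Real.sqrt (2 * Real.pi))⁻¹ * Real.exp (-(z ^ 2) / 2)

/-- The MVR setting: a probability space carrying `(Y, X)` with `X` having intercept `1`,
together with a scale function satisfying Assumption 1. -/
structure Setting (k : ℕ) [NeZero k] (Ω : Type*) [MeasurableSpace Ω] where
  P : Measure Ω
  isProb : IsProbabilityMeasure P
  Y : Ω → ℝ
  X : Ω → Fin k → ℝ
  measY : Measurable Y
  measX : Measurable X
  intercept : ∀ᵐ ω ∂P, X ω 0 = 1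
  A : LB
  s : ℝ → ℝ
  scale : IsScale A s

namespace Setting

variable {k : ℕ} [NeZero k] {Ω : Type*} [MeasurableSpace Ω] (S : Setting k Ω)

/-- First derivative of the scale function. -/
def s1 : ℝ → ℝ := deriv S.s

/-- Second derivative of the scale function. -/
def s2 : ℝ → ℝ := deriv (deriv S.s)

/-- Third derivative of the scale function. -/
def s3 : ℝ → ℝ := deriv (deriv (deriv S.s))

/-- The parameter set `Θ_γ = {γ : P[s(X'γ) > 0] = 1}`. -/
def Tγ : Set (Fin k → ℝ) := {γ | ∀ᵐ ω ∂S.P, 0 < S.s (mdot (S.X ω) γ)}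

/-- The parameter space `Θ = ℝ^k × Θ_γ`. -/
def T : Set ((Fin k → ℝ) × (Fin k → ℝ)) := Set.univ ×ˢ S.Tγ

/-- Standardized residual `e(Y,X,θ) = (Y − X'β)/s(X'γ)`. -/
def e (θ : (Fin k → ℝ) × (Fin k → ℝ)) (ω : Ω) : ℝ :=
  (S.Y ω - mdot (S.X ω) θ.1) / S.s (mdot (S.X ω) θ.2)

/-- The MVR loss `L(X,Y,θ) = (1/2){e(Y,X,θ)² + 1}·s(X'γ)`. -/
def L (θ : (Fin k → ℝ) × (Fin k → ℝ)) (ω : Ω) : ℝ :=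
  (1 / 2) * ((S.e θ ω) ^ 2 + 1) * S.s (mdot (S.X ω) θ.2)

/-- The MVR objective `Q(θ) = E[L(X,Y,θ)]`. -/
def Q (θ : (Fin k → ℝ) × (Fin k → ℝ)) : ℝ := ∫ ω, S.L θ ω ∂S.P

/-- The σ-algebra generated by `X`. -/
def mX : MeasurableSpace Ω := MeasurableSpace.comap S.X inferInstance

/-- Conditional mean function `μ(X) = E[Y | X]` (as a function of `ω`). -/
def condMean : Ω → ℝ := S.P[S.Y | S.mX]

/-- Conditional variance function `σ(X)² = E[(Y − E[Y|X])² | X]` (as a function of `ω`). -/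
def condVar : Ω → ℝ := S.P[fun ω => (S.Y ω - S.condMean ω) ^ 2 | S.mX]

/-- Conditional standard deviation `σ(X)`. -/
def condSD (ω : Ω) : ℝ := Real.sqrt (S.condVar ω)

/-- Assumption 2: `σ(X)²` is bounded away from `0` (almost surely) on the support of `X`. -/
def Assm2 : Prop := ∃ c : ℝ, 0 < c ∧ ∀ᵐ ω ∂S.P, c ≤ S.condVar ω

/-- Assumption 3: the moment conditions. -/
def Assm3 : Prop :=
  Integrable (fun ω => (S.Y ω) ^ 4) S.P ∧
  Integrable (fun ω => (ednorm (S.X ω)) ^ 4) S.P ∧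
  ∀ γ ∈ S.Tγ,
    Integrable (fun ω => (ednorm (S.X ω)) ^ 4 * (S.s2 (mdot (S.X ω) γ)) ^ 2) S.P ∧
    Integrable (fun ω => (ednorm (S.X ω)) ^ 6 * (S.s3 (mdot (S.X ω) γ)) ^ 2) S.P ∧
    Integrable (fun ω =>
      (ednorm (S.X ω)) ^ 6 * (S.s1 (mdot (S.X ω) γ)) ^ 2 * (S.s2 (mdot (S.X ω) γ)) ^ 2) S.P

/-- The matrix `E[XX'/s(X'γ)]`. -/
def M (γ : Fin k → ℝ) : Matrix (Fin k) (Fin k) ℝ :=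
  Matrix.of fun i j => ∫ ω, S.X ω i * S.X ω j / S.s (mdot (S.X ω) γ) ∂S.P

/-- Assumption 4: `E[XX'/s(X'γ)]` is nonsingular for all `γ ∈ Θ_γ`. -/
def Assm4 : Prop := ∀ γ ∈ S.Tγ, (S.M γ).det ≠ 0

/-- The restricted (constant-scale) MVR objective defining OLS. -/
def QLS (β : Fin k → ℝ) (g : ℝ) : ℝ :=
  ∫ ω, (1 / 2) * (((S.Y ω - mdot (S.X ω) β) / S.s g) ^ 2 + 1) * S.s g ∂S.P

/-- `(β, g)` is the OLS solution: it minimizes the constant-scale MVR objective over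
`Θ_LS = ℝ^k × {g : s(g) > 0}`. -/
def IsOLS (β : Fin k → ℝ) (g : ℝ) : Prop :=
  0 < S.s g ∧ ∀ β' : Fin k → ℝ, ∀ g' : ℝ, 0 < S.s g' → S.QLS β g ≤ S.QLS β' g'

/-- `θ` is the unique minimizer of the MVR objective `Q` over `Θ`. -/
def IsMVRmin (θ : (Fin k → ℝ) × (Fin k → ℝ)) : Prop :=
  θ ∈ S.T ∧ ∀ θ' ∈ S.T, θ' ≠ θ → S.Q θ < S.Q θ'

/-- The scale function is specified as `s(t) = t` or `s(t) = exp(t)`. -/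
def LinOrExp : Prop := (∀ t, S.s t = t) ∨ (∀ t, S.s t = Real.exp t)

/-- The scaled Gaussian density `f_θ(Y,X) = φ(e(Y,X,θ))/s(X'γ)`. -/
def fdens (θ : (Fin k → ℝ) × (Fin k → ℝ)) (ω : Ω) : ℝ :=
  gaussD (S.e θ ω) / S.s (mdot (S.X ω) θ.2)

/-- The GLS reference density `f†_β(Y,X) = φ((Y−X'β)/σ(X))/σ(X)`. -/
def fdagger (β : Fin k → ℝ) (ω : Ω) : ℝ :=
  gaussD ((S.Y ω - mdot (S.X ω) β) / S.condSD ω) / S.condSD ω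

/-- The infeasible MVR objective written in terms of `μ(X)` and `σ(X)²`. -/
def Qtilde (θ : (Fin k → ℝ) × (Fin k → ℝ)) : ℝ :=
  (1 / 2) * ∫ ω, (((S.condMean ω - mdot (S.X ω) θ.1) / S.s (mdot (S.X ω) θ.2)) ^ 2 + 1) *
      S.s (mdot (S.X ω) θ.2) ∂S.P +
  (1 / 2) * ∫ ω, S.condVar ω / S.s (mdot (S.X ω) θ.2) ∂S.P

/-- The block matrix `Ψ(θ)` of Lemma 2. -/
def Psi (θ : (Fin k → ℝ) × (Fin k → ℝ)) : Matrix (Fin k ⊕ Fin k) (Fin k ⊕ Fin k) ℝ :=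
  Matrix.fromBlocks
    (Matrix.of fun i j => ∫ ω, S.X ω i * S.X ω j / S.s (mdot (S.X ω) θ.2) ∂S.P)
    (Matrix.of fun i j => ∫ ω,
      S.X ω i * S.X ω j * S.s1 (mdot (S.X ω) θ.2) * S.e θ ω / S.s (mdot (S.X ω) θ.2) ∂S.P)
    (Matrix.of fun i j => ∫ ω,
      S.X ω i * S.X ω j * S.s1 (mdot (S.X ω) θ.2) * S.e θ ω / S.s (mdot (S.X ω) θ.2) ∂S.P)
    (Matrix.of fun i j => ∫ ω,
      S.X ω i * S.X ω j * (S.s1 (mdot (S.X ω) θ.2) * S.e θ ω) ^ 2 / S.s (mdot (S.X ω) θ.2) ∂S.P)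

end Setting

end MVR

open MVR MVR.Setting

/-- The functional MVR criterion `Q₀` is uniquely minimized, over admissible conditional
standard deviation functions, by the true conditional standard deviation `σ`, with
`Q₀(σ) = E[σ(X)]`. -/

lemma aux_lintegral_mul_condexp {Ω : Type*} {m m0 : MeasurableSpace Ω} (hm : m ≤ m0)
    (μ : Measure Ω) [IsFiniteMeasure μ] {f g : Ω → ℝ}
    (hf : StronglyMeasurable[m] f) (hf0 : ∀ ω, 0 ≤ f ω)
    (hg : Integrable g μ) (hg0 : 0 ≤ᵐ[μ] g) :
    ∫⁻ ω, ENNReal.ofReal (f ω * g ω) ∂μ =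
      ∫⁻ ω, ENNReal.ofReal (f ω * (μ[g|m]) ω) ∂μ := by
  haveI : SigmaFinite (μ.trim hm) := by infer_instance
  set c : Ω → ℝ := μ[g|m] with hc
  have hc0 : 0 ≤ᵐ[μ] c := condExp_nonneg hg0
  have hc_int : Integrable c μ := integrable_condExp
  set fn : ℕ → Ω → ℝ := fun n ω => min (f ω) n with hfn
  have hfn_meas : ∀ n, StronglyMeasurable[m] (fn n) :=
    fun n => (hf.measurable.min measurable_const).stronglyMeasurable
  have hfn_nonneg : ∀ n ω, 0 ≤ fn n ω := fun n ω => le_min (hf0 ω) n.cast_nonneg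
  have hfn_bdd : ∀ n, ∀ ω, ‖fn n ω‖ ≤ n := by
    intro n ω
    rw [Real.norm_eq_abs, abs_of_nonneg (hfn_nonneg n ω)]
    exact min_le_right _ _
  have key : ∀ n, ∫⁻ ω, ENNReal.ofReal (fn n ω * g ω) ∂μ =
      ∫⁻ ω, ENNReal.ofReal (fn n ω * c ω) ∂μ := by
    intro n
    have hmeas : AEStronglyMeasurable (fn n) μ :=
      ((hfn_meas n).mono hm).aestronglyMeasurable
    have hfg : Integrable (fun ω => fn n ω * g ω) μ :=
      hg.bdd_mul hmeas (Filter.Eventually.of_forall (hfn_bdd n))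
    have hfc : Integrable (fun ω => fn n ω * c ω) μ :=
      hc_int.bdd_mul hmeas (Filter.Eventually.of_forall (hfn_bdd n))
    have h1 : μ[fun ω => fn n ω * g ω|m] =ᵐ[μ] fun ω => fn n ω * c ω :=
      condExp_mul_of_stronglyMeasurable_left (hfn_meas n) hfg hg
    have h2 : ∫ ω, fn n ω * g ω ∂μ = ∫ ω, fn n ω * c ω ∂μ := by
      rw [← integral_condExp hm (f := fun ω => fn n ω * g ω)]
      exact integral_congr_ae h1
    have h3 : ENNReal.ofReal (∫ ω, fn n ω * g ω ∂μ) = ∫⁻ ω, ENNReal.ofReal (fn n ω * g ω) ∂μ :=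
      ofReal_integral_eq_lintegral_ofReal hfg
        (hg0.mono fun ω hω => mul_nonneg (hfn_nonneg n ω) hω)
    have h4 : ENNReal.ofReal (∫ ω, fn n ω * c ω ∂μ) = ∫⁻ ω, ENNReal.ofReal (fn n ω * c ω) ∂μ :=
      ofReal_integral_eq_lintegral_ofReal hfc
        (hc0.mono fun ω hω => mul_nonneg (hfn_nonneg n ω) hω)
    rw [← h3, ← h4, h2]
  have hmct : ∀ (h : Ω → ℝ), AEStronglyMeasurable h μ → 0 ≤ᵐ[μ] h →
      ∫⁻ ω, ENNReal.ofReal (f ω * h ω) ∂μ =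
        ⨆ n, ∫⁻ ω, ENNReal.ofReal (fn n ω * h ω) ∂μ := by
    intro h hh hh0
    have hsup : ∀ᵐ ω ∂μ, ENNReal.ofReal (f ω * h ω) = ⨆ n, ENNReal.ofReal (fn n ω * h ω) := by
      filter_upwards [hh0] with ω hω
      refine le_antisymm ?_ (iSup_le fun n => ENNReal.ofReal_le_ofReal
        (mul_le_mul_of_nonneg_right (min_le_left _ _) hω))
      obtain ⟨n, hn⟩ := exists_nat_ge (f ω)
      have : fn n ω = f ω := min_eq_left hn
      exact le_trans (le_of_eq (by rw [this])) (le_iSup (fun n => ENNReal.ofReal (fn n ω * h ω)) n)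
    have hmeasn : ∀ n, AEMeasurable (fun ω => ENNReal.ofReal (fn n ω * h ω)) μ := by
      intro n
      exact ENNReal.measurable_ofReal.comp_aemeasurable
        ((((hfn_meas n).mono hm).measurable.aemeasurable).mul hh.aemeasurable)
    have hmono : ∀ᵐ ω ∂μ, Monotone fun n => ENNReal.ofReal (fn n ω * h ω) := by
      filter_upwards [hh0] with ω hω
      intro a b hab
      exact ENNReal.ofReal_le_ofReal (mul_le_mul_of_nonneg_right
        (min_le_min le_rfl (Nat.cast_le.mpr hab)) hω)
    rw [lintegral_congr_ae hsup, lintegral_iSup' hmeasn hmono]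
  rw [hmct g hg.aestronglyMeasurable hg0, hmct c hc_int.aestronglyMeasurable hc0]
  exact iSup_congr key


theorem stmt_19 {k : ℕ} [NeZero k] {Ω : Type*} [MeasurableSpace Ω] (S : MVR.Setting k Ω)
    (hY2 : Integrable (fun ω => (S.Y ω) ^ 2) S.P)
    (β₀ : Fin k → ℝ) (hmean : ∀ᵐ ω ∂S.P, S.condMean ω = mdot (S.X ω) β₀)
    (hσpos : ∀ᵐ ω ∂S.P, 0 < S.condSD ω) :
    (∀ ψ : (Fin k → ℝ) → ℝ, Measurable ψ →
      Integrable (fun ω => ψ (S.X ω)) S.P →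
      (∀ᵐ ω ∂S.P, 0 < ψ (S.X ω)) →
      Integrable (fun ω =>
        (1 / 2) * (((S.Y ω - mdot (S.X ω) β₀) / ψ (S.X ω)) ^ 2 + 1) * ψ (S.X ω)) S.P →
      (∫ ω, (1 / 2) * (((S.Y ω - mdot (S.X ω) β₀) / S.condSD ω) ^ 2 + 1) * S.condSD ω ∂S.P ≤
        ∫ ω, (1 / 2) * (((S.Y ω - mdot (S.X ω) β₀) / ψ (S.X ω)) ^ 2 + 1) * ψ (S.X ω) ∂S.P) ∧
      ((∫ ω, (1 / 2) * (((S.Y ω - mdot (S.X ω) β₀) / ψ (S.X ω)) ^ 2 + 1) * ψ (S.X ω) ∂S.P =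
        ∫ ω, (1 / 2) * (((S.Y ω - mdot (S.X ω) β₀) / S.condSD ω) ^ 2 + 1) * S.condSD ω ∂S.P) ↔
        (fun ω => ψ (S.X ω)) =ᵐ[S.P] S.condSD)) ∧
    (∫ ω, (1 / 2) * (((S.Y ω - mdot (S.X ω) β₀) / S.condSD ω) ^ 2 + 1) * S.condSD ω ∂S.P =
      ∫ ω, S.condSD ω ∂S.P) := by
  classical
  haveI : IsProbabilityMeasure S.P := S.isProb
  have hm : S.mX ≤ ‹MeasurableSpace Ω› := measurable_iff_comap_le.mp S.measX
  haveI : SigmaFinite (S.P.trim hm) := by infer_instance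
  set g : Ω → ℝ := fun ω => (S.Y ω - mdot (S.X ω) β₀) ^ 2 with hg_def
  have hg0 : ∀ ω, 0 ≤ g ω := fun ω => sq_nonneg _
  have hXβ_meas : Measurable fun ω => mdot (S.X ω) β₀ := by
    unfold mdot
    exact Finset.measurable_sum _ fun i _ => ((measurable_pi_apply i).comp S.measX).mul_const _
  have hg_meas : Measurable g := (S.measY.sub hXβ_meas).pow_const 2
  have hge : (fun ω => (S.Y ω - S.condMean ω) ^ 2) =ᵐ[S.P] g := by
    filter_upwards [hmean] with ω h
    show _ = (S.Y ω - mdot (S.X ω) β₀) ^ 2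
    rw [h]
  have hgint : Integrable g S.P := by
    by_contra hni
    have hni' : ¬ Integrable (fun ω => (S.Y ω - S.condMean ω) ^ 2) S.P :=
      fun hin => hni ((integrable_congr hge).mp hin)
    have hzero : S.condVar = 0 := condExp_of_not_integrable hni'
    obtain ⟨ω, hω⟩ := hσpos.exists
    have h0 : S.condSD ω = 0 := by simp [Setting.condSD, hzero]
    rw [h0] at hω
    exact lt_irrefl 0 hω
  have hVg : S.condVar =ᵐ[S.P] S.P[g | S.mX] := condExp_congr_ae hge
  have hV_nonneg : 0 ≤ᵐ[S.P] S.condVar :=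
    condExp_nonneg (Filter.Eventually.of_forall fun ω => sq_nonneg _)
  have hV_int : Integrable S.condVar S.P := integrable_condExp
  have hV_sm : StronglyMeasurable[S.mX] S.condVar := stronglyMeasurable_condExp
  have hσ_nonneg : ∀ ω, 0 ≤ S.condSD ω := fun ω => Real.sqrt_nonneg _
  have hσ_sm : StronglyMeasurable[S.mX] S.condSD :=
    Real.continuous_sqrt.comp_stronglyMeasurable hV_sm
  have hσ_meas : Measurable S.condSD := (hσ_sm.mono hm).measurable
  have hσ_int : Integrable S.condSD S.P := by
    refine Integrable.mono' ((integrable_const (1:ℝ)).add hV_int.abs)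
      hσ_meas.aestronglyMeasurable (Filter.Eventually.of_forall fun ω => ?_)
    have h1 : Real.sqrt (S.condVar ω) ≤ Real.sqrt |S.condVar ω| :=
      Real.sqrt_le_sqrt (le_abs_self _)
    have h2 := Real.sq_sqrt (abs_nonneg (S.condVar ω))
    have h3 := Real.sqrt_nonneg |S.condVar ω|
    rw [Real.norm_eq_abs, abs_of_nonneg (hσ_nonneg ω)]
    show Real.sqrt (S.condVar ω) ≤ 1 + |S.condVar ω|
    nlinarith [sq_nonneg (Real.sqrt |S.condVar ω| - 1)]
  have key : ∀ f : Ω → ℝ, StronglyMeasurable[S.mX] f → (∀ ω, 0 ≤ f ω) →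
      ∫⁻ ω, ENNReal.ofReal (f ω * g ω) ∂S.P =
        ∫⁻ ω, ENNReal.ofReal (f ω * S.condVar ω) ∂S.P := by
    intro f hf hf0
    rw [aux_lintegral_mul_condexp hm S.P hf hf0 hgint
      (Filter.Eventually.of_forall fun ω => hg0 ω)]
    refine lintegral_congr_ae ?_
    filter_upwards [hVg] with ω h
    rw [h]
  -- the σ case
  set sg : Ω → ℝ := fun ω => (S.condSD ω)⁻¹ with hsg_def
  have hsg0 : ∀ ω, 0 ≤ sg ω := fun ω => inv_nonneg.mpr (hσ_nonneg ω)
  have hsg_sm : StronglyMeasurable[S.mX] sg := (hσ_sm.measurable.inv).stronglyMeasurable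
  have hσV : (fun ω => sg ω * S.condVar ω) =ᵐ[S.P] S.condSD := by
    filter_upwards [hσpos] with ω hω
    show (S.condSD ω)⁻¹ * S.condVar ω = S.condSD ω
    rw [inv_mul_eq_div]
    exact Real.div_sqrt
  have lσ : ∫⁻ ω, ENNReal.ofReal (sg ω * g ω) ∂S.P =
      ∫⁻ ω, ENNReal.ofReal (S.condSD ω) ∂S.P := by
    rw [key sg hsg_sm hsg0]
    exact lintegral_congr_ae (hσV.mono fun ω h => congrArg ENNReal.ofReal h)
  have hσ_lint : ∫⁻ ω, ENNReal.ofReal (S.condSD ω) ∂S.P =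
      ENNReal.ofReal (∫ ω, S.condSD ω ∂S.P) :=
    (ofReal_integral_eq_lintegral_ofReal hσ_int (Filter.Eventually.of_forall hσ_nonneg)).symm
  have hsgg_int : Integrable (fun ω => sg ω * g ω) S.P := by
    constructor
    · exact ((hsg_sm.mono hm).measurable.mul hg_meas).aestronglyMeasurable
    · rw [hasFiniteIntegral_iff_ofReal
        (Filter.Eventually.of_forall fun ω => mul_nonneg (hsg0 ω) (hg0 ω)), lσ, hσ_lint]
      exact ENNReal.ofReal_lt_top
  have hiσg : ∫ ω, sg ω * g ω ∂S.P = ∫ ω, S.condSD ω ∂S.P := by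
    have hA := ofReal_integral_eq_lintegral_ofReal hsgg_int
      (Filter.Eventually.of_forall fun ω => mul_nonneg (hsg0 ω) (hg0 ω))
    have heq : ENNReal.ofReal (∫ ω, sg ω * g ω ∂S.P) =
        ENNReal.ofReal (∫ ω, S.condSD ω ∂S.P) := by rw [hA, lσ, hσ_lint]
    exact (ENNReal.ofReal_eq_ofReal_iff
      (integral_nonneg fun ω => mul_nonneg (hsg0 ω) (hg0 ω)) (integral_nonneg hσ_nonneg)).mp heq
  have hQσ : ∫ ω, (1 / 2) * (((S.Y ω - mdot (S.X ω) β₀) / S.condSD ω) ^ 2 + 1) * S.condSD ω ∂S.P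
      = ∫ ω, S.condSD ω ∂S.P := by
    have hpt : (fun ω => (1 / 2) * (((S.Y ω - mdot (S.X ω) β₀) / S.condSD ω) ^ 2 + 1) * S.condSD ω)
        =ᵐ[S.P] fun ω => (1/2) * (sg ω * g ω) + (1/2) * S.condSD ω := by
      filter_upwards [hσpos] with ω hω
      have hne : S.condSD ω ≠ 0 := ne_of_gt hω
      show (1 / 2) * (((S.Y ω - mdot (S.X ω) β₀) / S.condSD ω) ^ 2 + 1) * S.condSD ω
        = (1/2) * ((S.condSD ω)⁻¹ * (S.Y ω - mdot (S.X ω) β₀) ^ 2) + (1/2) * S.condSD ω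
      field_simp
    rw [integral_congr_ae hpt, integral_add (hsgg_int.const_mul _) (hσ_int.const_mul _),
        integral_const_mul, integral_const_mul, hiσg]
    ring
  refine ⟨?_, hQσ⟩
  intro ψ hψmeas hψint hψpos hQint
  have hψXm : Measurable[S.mX] fun ω => ψ (S.X ω) :=
    hψmeas.comp (measurable_iff_comap_le.mpr le_rfl)
  set p : Ω → ℝ := fun ω => ψ (S.X ω) with hp_def
  set fψ : Ω → ℝ := fun ω => |(p ω)⁻¹| with hfψ_def
  have hfψ0 : ∀ ω, 0 ≤ fψ ω := fun ω => abs_nonneg _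
  have hfψ_sm : StronglyMeasurable[S.mX] fψ := (measurable_abs.comp hψXm.inv).stronglyMeasurable
  have hfψg_int : Integrable (fun ω => fψ ω * g ω) S.P := by
    have heq : (fun ω => fψ ω * g ω) =ᵐ[S.P]
        fun ω => 2 * ((1 / 2) * (((S.Y ω - mdot (S.X ω) β₀) / p ω) ^ 2 + 1) * p ω) - p ω := by
      filter_upwards [hψpos] with ω hω
      have hne : p ω ≠ 0 := ne_of_gt hω
      show |(p ω)⁻¹| * (S.Y ω - mdot (S.X ω) β₀) ^ 2 = _
      rw [abs_of_pos (inv_pos.mpr hω)]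
      field_simp
      ring
    exact ((hQint.const_mul 2).sub hψint).congr heq.symm
  have lψ : ∫⁻ ω, ENNReal.ofReal (fψ ω * g ω) ∂S.P =
      ∫⁻ ω, ENNReal.ofReal (fψ ω * S.condVar ω) ∂S.P := key fψ hfψ_sm hfψ0
  have hfψV_nonneg : 0 ≤ᵐ[S.P] fun ω => fψ ω * S.condVar ω :=
    hV_nonneg.mono fun ω h => mul_nonneg (hfψ0 ω) h
  have hfψV_int : Integrable (fun ω => fψ ω * S.condVar ω) S.P := by
    constructor
    · exact ((hfψ_sm.mono hm).measurable.mul (hV_sm.mono hm).measurable).aestronglyMeasurable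
    · rw [hasFiniteIntegral_iff_ofReal hfψV_nonneg, ← lψ,
        ← ofReal_integral_eq_lintegral_ofReal hfψg_int
          (Filter.Eventually.of_forall fun ω => mul_nonneg (hfψ0 ω) (hg0 ω))]
      exact ENNReal.ofReal_lt_top
  have hiψeq : ∫ ω, fψ ω * g ω ∂S.P = ∫ ω, fψ ω * S.condVar ω ∂S.P := by
    have hA := ofReal_integral_eq_lintegral_ofReal hfψg_int
      (Filter.Eventually.of_forall fun ω => mul_nonneg (hfψ0 ω) (hg0 ω))
    have hB := ofReal_integral_eq_lintegral_ofReal hfψV_int hfψV_nonneg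
    have heq : ENNReal.ofReal (∫ ω, fψ ω * g ω ∂S.P) =
        ENNReal.ofReal (∫ ω, fψ ω * S.condVar ω ∂S.P) := by rw [hA, hB, lψ]
    exact (ENNReal.ofReal_eq_ofReal_iff
      (integral_nonneg fun ω => mul_nonneg (hfψ0 ω) (hg0 ω))
      (integral_nonneg_of_ae hfψV_nonneg)).mp heq
  set h : Ω → ℝ := fun ω => (1/2) * (fψ ω * S.condVar ω) + (1/2) * p ω with hh_def
  have hh_int : Integrable h S.P := (hfψV_int.const_mul _).add (hψint.const_mul _)
  have hQψ_eq : ∫ ω, (1 / 2) * (((S.Y ω - mdot (S.X ω) β₀) / p ω) ^ 2 + 1) * p ω ∂S.P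
      = ∫ ω, h ω ∂S.P := by
    have hpt : (fun ω => (1 / 2) * (((S.Y ω - mdot (S.X ω) β₀) / p ω) ^ 2 + 1) * p ω)
        =ᵐ[S.P] fun ω => (1/2) * (fψ ω * g ω) + (1/2) * p ω := by
      filter_upwards [hψpos] with ω hω
      have hne : p ω ≠ 0 := ne_of_gt hω
      show _ = (1/2) * (|(p ω)⁻¹| * (S.Y ω - mdot (S.X ω) β₀) ^ 2) + (1/2) * p ω
      rw [abs_of_pos (inv_pos.mpr hω)]
      field_simp
      ring
    have hrhs : ∫ ω, h ω ∂S.P =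
        (1/2) * (∫ ω, fψ ω * S.condVar ω ∂S.P) + (1/2) * ∫ ω, p ω ∂S.P := by
      rw [integral_add (hfψV_int.const_mul _) (hψint.const_mul _),
        integral_const_mul, integral_const_mul]
    rw [integral_congr_ae hpt, integral_add (hfψg_int.const_mul _) (hψint.const_mul _),
      integral_const_mul, integral_const_mul, hiψeq, hrhs]
  have hσ_le_h : ∀ᵐ ω ∂S.P, S.condSD ω ≤ h ω ∧ (h ω = S.condSD ω → p ω = S.condSD ω) := by
    filter_upwards [hσpos, hψpos, hV_nonneg] with ω h1 h2 h3
    have hv : S.condVar ω = S.condSD ω ^ 2 := (Real.sq_sqrt h3).symm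
    have hfe : fψ ω = (p ω)⁻¹ := abs_of_pos (inv_pos.mpr h2)
    have hne : p ω ≠ 0 := ne_of_gt h2
    have hqpos : 0 < (p ω)⁻¹ := inv_pos.mpr h2
    have hexp : (p ω)⁻¹ * (S.condSD ω - p ω) ^ 2
        = (p ω)⁻¹ * S.condSD ω ^ 2 - 2 * S.condSD ω + p ω := by
      field_simp
      ring
    have h5 : 0 ≤ (p ω)⁻¹ * (S.condSD ω - p ω) ^ 2 := mul_nonneg hqpos.le (sq_nonneg _)
    constructor
    · show S.condSD ω ≤ (1/2) * (fψ ω * S.condVar ω) + (1/2) * p ω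
      rw [hfe, hv]
      linarith [h5, hexp]
    · intro he
      have he' : (1/2) * ((p ω)⁻¹ * S.condSD ω ^ 2) + (1/2) * p ω = S.condSD ω := by
        rw [← hfe, ← hv]; exact he
      have h6 : (p ω)⁻¹ * (S.condSD ω - p ω) ^ 2 ≤ 0 := by linarith [hexp, he']
      have h7 : (S.condSD ω - p ω) ^ 2 ≤ 0 := by nlinarith [h6, hqpos]
      have h8 : S.condSD ω - p ω = 0 :=
        pow_eq_zero_iff two_ne_zero |>.mp (le_antisymm h7 (sq_nonneg _))
      linarith
  constructor
  · rw [hQσ, hQψ_eq]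
    exact integral_mono_ae hσ_int hh_int (hσ_le_h.mono fun ω hw => hw.1)
  constructor
  · intro heq
    rw [hQψ_eq, hQσ] at heq
    have hnn : 0 ≤ᵐ[S.P] fun ω => h ω - S.condSD ω :=
      hσ_le_h.mono fun ω hw => sub_nonneg.mpr hw.1
    have hint0 : ∫ ω, (h ω - S.condSD ω) ∂S.P = 0 := by
      rw [integral_sub hh_int hσ_int]; linarith [heq]
    have h0 : (fun ω => h ω - S.condSD ω) =ᵐ[S.P] 0 :=
      (integral_eq_zero_iff_of_nonneg_ae hnn (hh_int.sub hσ_int)).mp hint0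
    filter_upwards [h0, hσ_le_h] with ω h4 h5
    have h6 : h ω = S.condSD ω := by
      have h4' : h ω - S.condSD ω = 0 := h4
      linarith
    exact h5.2 h6
  · intro heq
    refine integral_congr_ae ?_
    filter_upwards [heq] with ω hω
    show (1 / 2) * (((S.Y ω - mdot (S.X ω) β₀) / p ω) ^ 2 + 1) * p ω = _
    rw [show p ω = S.condSD ω from hω]
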